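/- arXiv:2305.15807 — 2 statements merged into one kernel-verified Lean document; each statement's English description precedes it below -/
import Mathlib

section
/- (Step 2 of the proof of Lemma 1, inequality (10).) Let X be a set, A a nonempty finite set, d ≥ 1, and C ∈ [0,1]^d. Let r : X×A → [0,1], c : X×A → [−1,1]^d. Fix t ≥ 1 and, for each 1 ≤ τ ≤ t, let x_τ ∈ X, λ_{τ−1} ∈ [0,∞)^d, functions r̂ucb_{τ−1} : X×A → [0,1], ĉlcb_{τ−1} : X×A → [−1,1]^d and errors ε_{τ−1} : X×A → [0,1]. Assume for all 1 ≤ τ ≤ t, x ∈ X, a ∈ A: r(x,a) ≤ r̂ucb_{τ−1}(x,a) ≤ r(x,a) + 2ε_{τ−1}(x,a) and c(x,a) − 2ε_{τ−1}(x,a)·1 ≤ ĉlcb_{τ−1}(x,a) ≤ c(x,a) (componentwise). Assume a_τ ∈ A maximizes a ↦ r̂ucb_{τ−1}(x_τ,a) − ⟨ĉlcb_{τ−1}(x_τ,a) − C, λ_{τ−1}⟩. Set Δĉ_τ = ĉlcb_{τ−1}(x_τ,a_τ) − C and g_τ(λ) = max_{a∈A}{ r(x_τ,a) − ⟨c(x_τ,a)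 − C, λ⟩ }. Then for every λ ∈ [0,∞)^d: Σ_{τ=1}^t ⟨Δĉ_τ, λ_{τ−1} − λ⟩ ≤ 2(1 + ‖λ‖₁) Σ_{τ=1}^t ε_{τ−1}(x_τ,a_τ) + Σ_{τ=1}^t ( g_τ(λ) − g_τ(λ_{τ−1}) ), where ‖·‖₁ is the ℓ1-norm. -/
open Finset

/-- Step 2 of the proof of Lemma 1 (inequality (10)): with optimistic estimates sandwiched
around `r` and `c`, and actions `a_τ` chosen to maximize the optimistic Lagrangian with
dual variable `λ_{τ−1} ≥ 0`, for every `λ ≥ 0`: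
`Σ_{τ=1}^t ⟨Δĉ_τ, λ_{τ−1} − λ⟩ ≤ 2(1 + ‖λ‖₁) Σ_τ ε_{τ−1}(x_τ,a_τ) + Σ_τ (g_τ(λ) − g_τ(λ_{τ−1}))`,
where `Δĉ_τ = ĉlcb_{τ−1}(x_τ,a_τ) − C` and
`g_τ(λ) = max_a { r(x_τ,a) − ⟨c(x_τ,a) − C, λ⟩ }`. -/
theorem per_round_optimism_bound
    {X : Type*} {A : Type*} [Fintype A] [Nonempty A] {d : ℕ} (hd : 0 < d)
    (C : Fin d → ℝ) (hC : ∀ i, C i ∈ Set.Icc (0 : ℝ) 1)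
    (r : X → A → ℝ) (c : X → A → Fin d → ℝ)
    (hr : ∀ x a, r x a ∈ Set.Icc (0 : ℝ) 1)
    (hc : ∀ x a i, c x a i ∈ Set.Icc (-1 : ℝ) 1)
    (t : ℕ) (ht : 1 ≤ t)
    (x : ℕ → X) (a : ℕ → A) (lam : ℕ → Fin d → ℝ)
    (hlam : ∀ τ ∈ Finset.Icc 1 t, ∀ i, 0 ≤ lam (τ - 1) i)
    (rucb : ℕ → X → A → ℝ) (clcb : ℕ → X → A → Fin d → ℝ) (eps : ℕ → X → A → ℝ)
    (hrucb : ∀ τ ∈ Finset.Icc 1 t, ∀ x' a',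
      r x' a' ≤ rucb (τ - 1) x' a' ∧ rucb (τ - 1) x' a' ≤ r x' a' + 2 * eps (τ - 1) x' a')
    (hclcb : ∀ τ ∈ Finset.Icc 1 t, ∀ x' a' i,
      c x' a' i - 2 * eps (τ - 1) x' a' ≤ clcb (τ - 1) x' a' i
        ∧ clcb (τ - 1) x' a' i ≤ c x' a' i)
    (heps : ∀ τ ∈ Finset.Icc 1 t, ∀ x' a', eps (τ - 1) x' a' ∈ Set.Icc (0 : ℝ) 1)
    (hmax : ∀ τ ∈ Finset.Icc 1 t, ∀ a' : A,
      rucb (τ - 1) (x τ) a' - ∑ i, (clcb (τ - 1) (x τ) a' i - C i) * lam (τ - 1) i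
        ≤ rucb (τ - 1) (x τ) (a τ)
            - ∑ i, (clcb (τ - 1) (x τ) (a τ) i - C i) * lam (τ - 1) i) :
    ∀ lamb : Fin d → ℝ, (∀ i, 0 ≤ lamb i) →
      ∑ τ ∈ Finset.Icc 1 t, ∑ i,
          (clcb (τ - 1) (x τ) (a τ) i - C i) * (lam (τ - 1) i - lamb i)
        ≤ 2 * (1 + ∑ i, |lamb i|) * (∑ τ ∈ Finset.Icc 1 t, eps (τ - 1) (x τ) (a τ))
          + ∑ τ ∈ Finset.Icc 1 t,
              ((Finset.univ.sup' Finset.univ_nonempty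
                  fun a' => r (x τ) a' - ∑ i, (c (x τ) a' i - C i) * lamb i)
                - (Finset.univ.sup' Finset.univ_nonempty
                  fun a' => r (x τ) a' - ∑ i, (c (x τ) a' i - C i) * lam (τ - 1) i)) := by

  intro lamb hlamb
  have key : ∀ τ ∈ Finset.Icc 1 t,
      ∑ i, (clcb (τ - 1) (x τ) (a τ) i - C i) * (lam (τ - 1) i - lamb i)
      ≤ 2 * (1 + ∑ i, |lamb i|) * eps (τ - 1) (x τ) (a τ)
        + ((Finset.univ.sup' Finset.univ_nonempty
              fun a' => r (x τ) a' - ∑ i, (c (x τ) a' i - C i) * lamb i)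
          - (Finset.univ.sup' Finset.univ_nonempty
              fun a' => r (x τ) a' - ∑ i, (c (x τ) a' i - C i) * lam (τ - 1) i)) := by
    intro τ hτ
    have hε : (0:ℝ) ≤ eps (τ - 1) (x τ) (a τ) :=
      (Set.mem_Icc.mp (heps τ hτ (x τ) (a τ))).1
    have h1 : (Finset.univ.sup' Finset.univ_nonempty
          fun a' => r (x τ) a' - ∑ i, (c (x τ) a' i - C i) * lam (τ - 1) i)
        ≤ rucb (τ - 1) (x τ) (a τ)
            - ∑ i, (clcb (τ - 1) (x τ) (a τ) i - C i) * lam (τ - 1) i := by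
      apply Finset.sup'_le
      intro a' _
      have hr' := (hrucb τ hτ (x τ) a').1
      have hsum : ∑ i, (clcb (τ - 1) (x τ) a' i - C i) * lam (τ - 1) i
          ≤ ∑ i, (c (x τ) a' i - C i) * lam (τ - 1) i := by
        apply Finset.sum_le_sum
        intro i _
        exact mul_le_mul_of_nonneg_right
          (by linarith [(hclcb τ hτ (x τ) a' i).2]) (hlam τ hτ i)
      have := hmax τ hτ a'
      linarith
    have h2 : rucb (τ - 1) (x τ) (a τ)
          - ∑ i, (clcb (τ - 1) (x τ) (a τ) i - C i) * lamb i
        ≤ (Finset.univ.sup' Finset.univ_nonempty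
              fun a' => r (x τ) a' - ∑ i, (c (x τ) a' i - C i) * lamb i)
          + 2 * (1 + ∑ i, |lamb i|) * eps (τ - 1) (x τ) (a τ) := by
      have hub := (hrucb τ hτ (x τ) (a τ)).2
      have hsum : ∑ i, (c (x τ) (a τ) i - C i) * lamb i
          ≤ (∑ i, (clcb (τ - 1) (x τ) (a τ) i - C i) * lamb i)
            + 2 * eps (τ - 1) (x τ) (a τ) * ∑ i, |lamb i| := by
        rw [Finset.mul_sum, ← Finset.sum_add_distrib]
        apply Finset.sum_le_sum
        intro i _
        have h := (hclcb τ hτ (x τ) (a τ) i).1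
        rw [abs_of_nonneg (hlamb i)]
        nlinarith [hlamb i]
      have hle := Finset.le_sup'
        (fun a' => r (x τ) a' - ∑ i, (c (x τ) a' i - C i) * lamb i)
        (Finset.mem_univ (a τ))
      have hexp : 2 * (1 + ∑ i, |lamb i|) * eps (τ - 1) (x τ) (a τ)
          = 2 * eps (τ - 1) (x τ) (a τ)
            + 2 * eps (τ - 1) (x τ) (a τ) * ∑ i, |lamb i| := by ring
      linarith
    have hsplit : ∑ i, (clcb (τ - 1) (x τ) (a τ) i - C i) * (lam (τ - 1) i - lamb i)
        = (∑ i, (clcb (τ - 1) (x τ) (a τ) i - C i) * lam (τ - 1) i)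
          - ∑ i, (clcb (τ - 1) (x τ) (a τ) i - C i) * lamb i := by
      rw [← Finset.sum_sub_distrib]
      apply Finset.sum_congr rfl
      intro i _
      ring
    linarith
  calc ∑ τ ∈ Finset.Icc 1 t, ∑ i,
        (clcb (τ - 1) (x τ) (a τ) i - C i) * (lam (τ - 1) i - lamb i)
      ≤ ∑ τ ∈ Finset.Icc 1 t,
          (2 * (1 + ∑ i, |lamb i|) * eps (τ - 1) (x τ) (a τ)
            + ((Finset.univ.sup' Finset.univ_nonempty
                  fun a' => r (x τ) a' - ∑ i, (c (x τ) a' i - C i) * lamb i)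
              - (Finset.univ.sup' Finset.univ_nonempty
                  fun a' => r (x τ) a' - ∑ i, (c (x τ) a' i - C i) * lam (τ - 1) i))) :=
        Finset.sum_le_sum key
    _ = _ := by rw [Finset.sum_add_distrib, ← Finset.mul_sum]
end

section
/- (Induction lemma, Step 4 of the proof of Lemma 1, inequality (12).) Let T ≥ 1 and A, B, C ≥ 0 be real numbers. Let (u_t)_{0 ≤ t ≤ T} be nonnegative real numbers with u₀ ≤ √A, and suppose that for all 1 ≤ t ≤ T: u_t² ≤ A + B·t + C·max_{1 ≤ τ ≤ t} u_{τ−1}. Then for all 0 ≤ t ≤ T: u_t ≤ M, where M = C/2 + √(A + B·T + C²/4). Consequently, u_t ≤ √A + √(B·T) + C for all 0 ≤ t ≤ T. -/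
open Finset

lemma sqrt_add_le_aux (a b : ℝ) (ha : 0 ≤ a) (hb : 0 ≤ b) :
    Real.sqrt (a + b) ≤ Real.sqrt a + Real.sqrt b := by
  have h1 : a + b ≤ (Real.sqrt a + Real.sqrt b) ^ 2 := by
    have := Real.sq_sqrt ha
    have := Real.sq_sqrt hb
    have := Real.sqrt_nonneg a
    have := Real.sqrt_nonneg b
    nlinarith
  calc Real.sqrt (a + b) ≤ Real.sqrt ((Real.sqrt a + Real.sqrt b) ^ 2) :=
        Real.sqrt_le_sqrt h1
    _ = Real.sqrt a + Real.sqrt b := by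
        rw [Real.sqrt_sq (by positivity)]

/-- Induction lemma (Step 4 of the proof of Lemma 1, inequality (12)): if `u₀ ≤ √A` and
`u_t² ≤ A + B·t + C·max_{1≤τ≤t} u_{τ−1}` for `1 ≤ t ≤ T`, then `u_t ≤ M` for all
`0 ≤ t ≤ T`, where `M = C/2 + √(A + B·T + C²/4)`; consequently
`u_t ≤ √A + √(B·T) + C` for all `0 ≤ t ≤ T`. -/
theorem induction_bound (T : ℕ) (hT : 1 ≤ T) (A B C : ℝ)
    (hA : 0 ≤ A) (hB : 0 ≤ B) (hC : 0 ≤ C)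
    (u : ℕ → ℝ) (hu : ∀ t, 0 ≤ u t) (hu0 : u 0 ≤ Real.sqrt A)
    (hrec : ∀ t, ∀ ht : 1 ≤ t, t ≤ T →
      (u t) ^ 2 ≤ A + B * t
        + C * (Finset.Icc 1 t).sup' (Finset.nonempty_Icc.mpr ht) (fun τ => u (τ - 1))) :
    (∀ t ≤ T, u t ≤ C / 2 + Real.sqrt (A + B * T + C ^ 2 / 4))
      ∧ (∀ t ≤ T, u t ≤ Real.sqrt A + Real.sqrt (B * T) + C) := by
  set M : ℝ := C / 2 + Real.sqrt (A + B * T + C ^ 2 / 4) with hMdef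
  have hD : (0:ℝ) ≤ A + B * T + C ^ 2 / 4 := by positivity
  have hsq : Real.sqrt (A + B * T + C ^ 2 / 4) ^ 2 = A + B * T + C ^ 2 / 4 :=
    Real.sq_sqrt hD
  have hsnn := Real.sqrt_nonneg (A + B * T + C ^ 2 / 4)
  have hM0 : 0 ≤ M := by positivity
  have hMsq : M ^ 2 = A + B * T + C * M := by
    rw [hMdef]; nlinarith
  have main : ∀ t, t ≤ T → u t ≤ M := by
    intro t
    induction t using Nat.strong_induction_on with
    | _ t ih =>
      intro htT
      rcases Nat.eq_zero_or_pos t with rfl | ht1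
      · calc u 0 ≤ Real.sqrt A := hu0
          _ ≤ Real.sqrt (A + B * T + C ^ 2 / 4) :=
            Real.sqrt_le_sqrt (by nlinarith [mul_nonneg hB (Nat.cast_nonneg T), sq_nonneg C])
          _ ≤ M := by rw [hMdef]; linarith
      · have hrec' := hrec t ht1 htT
        have hsup : (Finset.Icc 1 t).sup' (Finset.nonempty_Icc.mpr ht1)
            (fun τ => u (τ - 1)) ≤ M := by
          apply Finset.sup'_le
          intro τ hτ
          simp only [Finset.mem_Icc] at hτ
          exact ih (τ - 1) (by omega) (by omega)
        have hBt : B * (t:ℝ) ≤ B * T := by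
          apply mul_le_mul_of_nonneg_left _ hB
          exact_mod_cast htT
        have h2 : (u t) ^ 2 ≤ M ^ 2 := by
          rw [hMsq]
          calc (u t) ^ 2 ≤ A + B * t + C * ((Finset.Icc 1 t).sup'
                (Finset.nonempty_Icc.mpr ht1) (fun τ => u (τ - 1))) := hrec'
            _ ≤ A + B * T + C * M := by
                have := mul_le_mul_of_nonneg_left hsup hC
                linarith
        nlinarith [hu t]
  refine ⟨main, fun t ht => ?_⟩
  have : M ≤ Real.sqrt A + Real.sqrt (B * T) + C := by
    have h1 : Real.sqrt (A + B * T + C ^ 2 / 4) ≤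
        Real.sqrt (A + B * T) + Real.sqrt (C ^ 2 / 4) :=
      sqrt_add_le_aux _ _ (by positivity) (by positivity)
    have h2 : Real.sqrt (A + B * T) ≤ Real.sqrt A + Real.sqrt (B * T) :=
      sqrt_add_le_aux _ _ hA (by positivity)
    have h3 : Real.sqrt (C ^ 2 / 4) = C / 2 := by
      rw [show C ^ 2 / 4 = (C / 2) ^ 2 by ring, Real.sqrt_sq (by positivity)]
    rw [hMdef]; rw [h3] at h1; linarith
  linarith [main t ht]
end
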